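/- arXiv:1803.06038 — 3 statements merged into one kernel-verified Lean document; each statement's English description precedes it below -/
import Mathlib

section
/- Let Φ > 0, δ₁, δ₂ > 0, β > 1, and let W₁ be continuous nonnegative nondecreasing vanishing on the negatives. With l(x;b) = ∫_x^b e^{-Φz} W₁(z-x) dz, define for 0 < a ≤ b the function γ̃(a,b) = Φ δ₂ ( e^{-Φb} β - e^{-Φa} - δ₁ Φ l(a;b) ). Then a ↦ γ̃(a,b) is strictly increasing on (0,b), and γ̃(b,b) = Φ δ₂ e^{-Φb} (β - 1) > 0. -/
open MeasureTheory intervalIntegral Real Set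

theorem stmt5 (Φ δ₁ δ₂ β : ℝ) (hΦ : 0 < Φ) (hδ₁ : 0 < δ₁) (hδ₂ : 0 < δ₂) (hβ : 1 < β)
    (W₁ : ℝ → ℝ)
    (hW₁c : Continuous W₁) (hW₁nn : ∀ y, 0 ≤ W₁ y) (hW₁mono : Monotone W₁)
    (hW₁z : ∀ y < (0:ℝ), W₁ y = 0)
    (b : ℝ) (hb : 0 < b)
    (l : ℝ → ℝ) (hl : ∀ x, l x = ∫ z in x..b, Real.exp (-Φ * z) * W₁ (z - x))
    (γt : ℝ → ℝ)
    (hγt : ∀ a, γt a = Φ * δ₂ * (Real.exp (-Φ * b) * β - Real.exp (-Φ * a) - δ₁ * Φ * l a)) :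
    StrictMonoOn γt (Ioo 0 b) ∧
      γt b = Φ * δ₂ * Real.exp (-Φ * b) * (β - 1) ∧ 0 < γt b := by
  have hexp : ∀ x : ℝ, Continuous fun z : ℝ => Real.exp (-Φ * z) * W₁ (z - x) := fun x =>
    (Real.continuous_exp.comp (continuous_const.mul continuous_id)).mul
      (hW₁c.comp (continuous_id.sub continuous_const))
  have hlmono : ∀ x₁ x₂, x₁ ≤ x₂ → x₂ ≤ b → l x₂ ≤ l x₁ := by
    intro x₁ x₂ h12 h2b
    rw [hl, hl]
    calc (∫ z in x₂..b, Real.exp (-Φ*z) * W₁ (z - x₂))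
        ≤ ∫ z in x₂..b, Real.exp (-Φ*z) * W₁ (z - x₁) := by
          apply intervalIntegral.integral_mono_on h2b ((hexp x₂).intervalIntegrable _ _)
            ((hexp x₁).intervalIntegrable _ _)
          intro z _
          exact mul_le_mul_of_nonneg_left (hW₁mono (by linarith)) (Real.exp_pos _).le
      _ ≤ ∫ z in x₁..b, Real.exp (-Φ*z) * W₁ (z - x₁) := by
          apply intervalIntegral.integral_mono_interval h12 h2b le_rfl ?_
            ((hexp x₁).intervalIntegrable _ _)
          filter_upwards with z
          exact mul_nonneg (Real.exp_pos _).le (hW₁nn _)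
  have hlb : l b = 0 := by rw [hl, intervalIntegral.integral_same]
  refine ⟨?_, ?_, ?_⟩
  · intro a₁ h1 a₂ h2 h12
    rw [hγt, hγt]
    have hll := hlmono a₁ a₂ h12.le h2.2.le
    have hexplt : Real.exp (-Φ * a₂) < Real.exp (-Φ * a₁) :=
      Real.exp_lt_exp.mpr (by nlinarith)
    have hδΦ : 0 ≤ δ₁ * Φ := by positivity
    have := mul_le_mul_of_nonneg_left hll hδΦ
    have hpos : 0 < Φ * δ₂ := by positivity
    nlinarith
  · rw [hγt, hlb]; ring
  · rw [hγt, hlb]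
    have h1 : 0 < β - 1 := by linarith
    have h2 : Real.exp (-Φ * b) * β - Real.exp (-Φ * b) - δ₁ * Φ * 0
        = Real.exp (-Φ * b) * (β - 1) := by ring
    rw [h2]
    positivity
end

section
/- Let Φ, δ₁ > 0, b > 0 and W₁ continuous, nonnegative, nondecreasing, vanishing on the negatives. Define v'(x) = e^{-Φ(x-b)} + δ₁ Φ e^{Φb} l(x;b) for x > a, where l(x;b) = ∫_x^b e^{-Φz} W₁(z-x) dz (so l(x;b) = 0 for x ≥ b). Then v''(x) = -Φ e^{-Φ(x-b)} + δ₁ Φ e^{Φb} l'(x;b) ≤ -Φ e^{-Φ(x-b)} < 0, so x ↦ v'(x) is strictly decreasing on (a,∞); moreover v'(b) = 1 and v'(x) < 1 for x > b. -/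
open Set Real MeasureTheory intervalIntegral

theorem stmt9 (Φ δ₁ a b : ℝ) (hΦ : 0 < Φ) (hδ₁ : 0 < δ₁) (hb : 0 < b) (hab : a < b)
    (W₁ : ℝ → ℝ)
    (hW₁c : Continuous W₁) (hW₁nn : ∀ y, 0 ≤ W₁ y) (hW₁mono : Monotone W₁)
    (hW₁z : ∀ y < (0:ℝ), W₁ y = 0)
    (l : ℝ → ℝ) (hl : ∀ x, l x = ∫ z in x..b, Real.exp (-Φ * z) * W₁ (z - x))
    (lp : ℝ → ℝ) (hlp : ∀ x, HasDerivAt l (lp x) x)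
    (hlpneg : ∀ x, lp x ≤ 0)
    (vp : ℝ → ℝ)
    (hvp : ∀ x, vp x = Real.exp (-Φ * (x - b)) + δ₁ * Φ * Real.exp (Φ * b) * l x) :
    (∀ x, x > a →
      HasDerivAt vp (-Φ * Real.exp (-Φ * (x - b)) + δ₁ * Φ * Real.exp (Φ * b) * lp x) x ∧
      -Φ * Real.exp (-Φ * (x - b)) + δ₁ * Φ * Real.exp (Φ * b) * lp x ≤
        -Φ * Real.exp (-Φ * (x - b)) ∧
      -Φ * Real.exp (-Φ * (x - b)) < 0) ∧
    StrictAntiOn vp (Ioi a) ∧ vp b = 1 ∧ ∀ x > b, vp x < 1 := by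
  have hc : 0 < δ₁ * Φ * Real.exp (Φ * b) := by positivity
  have hvpfun : vp = fun x => Real.exp (-Φ * (x - b)) + δ₁ * Φ * Real.exp (Φ * b) * l x :=
    funext hvp
  have hderiv : ∀ x, HasDerivAt vp
      (-Φ * Real.exp (-Φ * (x - b)) + δ₁ * Φ * Real.exp (Φ * b) * lp x) x := by
    intro x
    rw [hvpfun]
    have h1 : HasDerivAt (fun x : ℝ => Real.exp (-Φ * (x - b)))
        (Real.exp (-Φ * (x - b)) * (-Φ)) x := by
      have : HasDerivAt (fun x : ℝ => -Φ * (x - b)) (-Φ) x := by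
        simpa using (((hasDerivAt_id x).sub_const b).const_mul (-Φ))
      exact this.exp
    have h2 := (hlp x).const_mul (δ₁ * Φ * Real.exp (Φ * b))
    have := h1.add h2
    exact this.congr_deriv (by ring)
  have hineq : ∀ x, -Φ * Real.exp (-Φ * (x - b)) + δ₁ * Φ * Real.exp (Φ * b) * lp x ≤
      -Φ * Real.exp (-Φ * (x - b)) := by
    intro x
    nlinarith [hlpneg x]
  have hneg : ∀ x : ℝ, -Φ * Real.exp (-Φ * (x - b)) < 0 := by
    intro x
    have := Real.exp_pos (-Φ * (x - b))
    nlinarith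
  have hcont : Continuous vp := by
    rw [continuous_iff_continuousAt]
    exact fun x => (hderiv x).continuousAt
  have hanti : StrictAntiOn vp (Ioi a) := by
    apply StrictAntiOn.mono (s := univ)
    · apply strictAntiOn_of_deriv_neg convex_univ hcont.continuousOn
      intro x _
      rw [(hderiv x).deriv]
      exact lt_of_le_of_lt (hineq x) (hneg x)
    · exact subset_univ _
  have hlb : l b = 0 := by rw [hl b, intervalIntegral.integral_same]
  have hlzero : ∀ x, b < x → l x = 0 := by
    intro x hx
    rw [hl x, intervalIntegral.integral_symm]
    rw [intervalIntegral.integral_of_le hx.le, MeasureTheory.integral_Ioc_eq_integral_Ioo]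
    rw [MeasureTheory.setIntegral_congr_fun measurableSet_Ioo
      (g := fun _ => (0:ℝ)) ?_, MeasureTheory.integral_zero, neg_zero]
    intro z hz
    simp only
    rw [hW₁z (z - x) (by linarith [hz.2]), mul_zero]
  refine ⟨fun x _ => ⟨hderiv x, hineq x, hneg x⟩, hanti, ?_, ?_⟩
  · rw [hvp b, hlb]
    simp
  · intro x hx
    rw [hvp x, hlzero x hx, mul_zero, add_zero]
    rw [show (1:ℝ) = Real.exp 0 from (Real.exp_zero).symm]
    apply Real.exp_lt_exp.mpr
    nlinarith
end

section
/- Let v : (0,∞) → ℝ be differentiable and concave, let 0 ≤ a ≤ b, and suppose v'(a+) ≤ β (with equality if a > 0), v'(b) ≤ 1 (with equality if b > 0), and 1 < β. Then for all x: if 0 < x < a then max over r₁ ∈ [0,δ₁] of r₁(1 - v'(x)) plus max over r₂ ∈ [0,δ₂] of r₂(v'(x) - β) equals δ₂(v'(x) - β); if a ≤ x < b it equals 0; and if x ≥ b it equals δ₁(1 - v'(x)). Here δ₁, δ₂ > 0. -/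
open Set Real

open Filter Topology
lemma supIcc (δ c : ℝ) (hδ : 0 < δ) :
    (⨆ r : Icc (0:ℝ) δ, (r : ℝ) * c) = δ * max c 0 := by
  have hne : Nonempty (Icc (0:ℝ) δ) := ⟨⟨0, le_refl 0, hδ.le⟩⟩
  have hb : ∀ r : Icc (0:ℝ) δ, (r : ℝ) * c ≤ δ * max c 0 := by
    rintro ⟨r, hr0, hrδ⟩
    calc r * c ≤ r * max c 0 := mul_le_mul_of_nonneg_left (le_max_left _ _) hr0
      _ ≤ δ * max c 0 := mul_le_mul_of_nonneg_right hrδ (le_max_right _ _)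
  have hbdd : BddAbove (range fun r : Icc (0:ℝ) δ => (r : ℝ) * c) := by
    refine ⟨δ * max c 0, ?_⟩
    rintro _ ⟨r, rfl⟩
    exact hb r
  refine le_antisymm (ciSup_le hb) ?_
  rcases le_or_gt 0 c with h | h
  · have := le_ciSup hbdd ⟨δ, hδ.le, le_refl δ⟩
    simpa [max_eq_left h] using this
  · have := le_ciSup hbdd ⟨0, le_refl 0, hδ.le⟩
    simpa [max_eq_right h.le] using this

lemma endpt (v : ℝ → ℝ) (hv : ∀ x ∈ Ioi (0:ℝ), DifferentiableAt ℝ v x)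
    (hconc : ConcaveOn ℝ (Ioi 0) v) {c D x : ℝ} (hc : 0 ≤ c)
    (hD : HasDerivWithinAt v D (Ici c) c) (hcx : c < x) (hx0 : 0 < x) :
    deriv v x ≤ D := by
  rcases hc.eq_or_lt with rfl | hc
  · -- c = 0
    have hslope : Tendsto (slope v 0) (𝓝[>] (0:ℝ)) (𝓝 D) := by
      have := hasDerivWithinAt_iff_tendsto_slope.mp hD
      rwa [Ici_sdiff_left] at this
    refine ge_of_tendsto hslope ?_
    filter_upwards [Ioo_mem_nhdsGT_of_mem ⟨le_refl (0:ℝ), hx0⟩] with t ht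
    obtain ⟨ht0, htx⟩ := ht
    have hcont : Tendsto v (𝓝[>] (0:ℝ)) (𝓝 (v 0)) :=
      hD.continuousWithinAt.mono_left (nhdsWithin_mono _ Ioi_subset_Ici_self)
    have key : ∀ s ∈ Ioo (0:ℝ) t, deriv v x ≤ slope v s t := by
      intro s hs
      have h1 : deriv v x ≤ deriv v t :=
        hconc.antitoneOn_deriv hv (mem_Ioi.2 ht0) (mem_Ioi.2 hx0) htx.le
      have h2 : deriv v t ≤ slope v s t :=
        hconc.deriv_le_slope (mem_Ioi.2 hs.1) (mem_Ioi.2 ht0) hs.2 (hv t (mem_Ioi.2 ht0))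
      exact h1.trans h2
    have hst : Tendsto (fun s => slope v s t) (𝓝[>] (0:ℝ)) (𝓝 (slope v 0 t)) := by
      simp only [slope_def_field]
      have h1 : Tendsto (fun s => v t - v s) (𝓝[>] (0:ℝ)) (𝓝 (v t - v 0)) :=
        tendsto_const_nhds.sub hcont
      have h2 : Tendsto (fun s : ℝ => t - s) (𝓝[>] (0:ℝ)) (𝓝 (t - 0)) :=
        tendsto_const_nhds.sub (tendsto_id.mono_left nhdsWithin_le_nhds)
      have := h1.div h2 (by simpa using ht0.ne')
      simpa [Pi.div_def] using this
    refine ge_of_tendsto hst ?_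
    filter_upwards [Ioo_mem_nhdsGT_of_mem ⟨le_refl (0:ℝ), ht0⟩] with s hs using key s hs
  · -- c > 0
    have h1 : deriv v x ≤ slope v c x :=
      hconc.deriv_le_slope (mem_Ioi.2 hc) (mem_Ioi.2 hx0) hcx (hv x (mem_Ioi.2 hx0))
    have h2 : slope v c x ≤ D :=
      hconc.slope_le_of_hasDerivWithinAt_Ioi (mem_Ioi.2 hc) (mem_Ioi.2 hx0) hcx
        (hD.mono Ioi_subset_Ici_self)
    exact h1.trans h2

theorem stmt13 (a b β δ₁ δ₂ : ℝ) (ha : 0 ≤ a) (hab : a ≤ b)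
    (hβ : 1 < β) (hδ₁ : 0 < δ₁) (hδ₂ : 0 < δ₂)
    (v : ℝ → ℝ)
    (hv : ∀ x ∈ Ioi (0:ℝ), DifferentiableAt ℝ v x)
    (hconc : ConcaveOn ℝ (Ioi 0) v)
    (Da Db : ℝ)
    (hDa : HasDerivWithinAt v Da (Ici a) a) (hDaβ : Da ≤ β) (hDaeq : 0 < a → Da = β)
    (hDb : HasDerivWithinAt v Db (Ici b) b) (hDb1 : Db ≤ 1) (hDbeq : 0 < b → Db = 1) :
    ∀ x : ℝ,
      ((0 < x ∧ x < a) →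
        (⨆ r : Icc (0:ℝ) δ₁, (r : ℝ) * (1 - deriv v x)) +
          (⨆ r : Icc (0:ℝ) δ₂, (r : ℝ) * (deriv v x - β)) = δ₂ * (deriv v x - β)) ∧
      ((a ≤ x ∧ x < b ∧ 0 < x) →
        (⨆ r : Icc (0:ℝ) δ₁, (r : ℝ) * (1 - deriv v x)) +
          (⨆ r : Icc (0:ℝ) δ₂, (r : ℝ) * (deriv v x - β)) = 0) ∧
      ((b ≤ x ∧ 0 < x) →
        (⨆ r : Icc (0:ℝ) δ₁, (r : ℝ) * (1 - deriv v x)) +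
          (⨆ r : Icc (0:ℝ) δ₂, (r : ℝ) * (deriv v x - β)) = δ₁ * (1 - deriv v x)) := by
  have hanti := hconc.antitoneOn_deriv hv
  -- derivative at a point c > 0 within Ici c equals deriv
  have hderiv_eq : ∀ (c D : ℝ), 0 < c → HasDerivWithinAt v D (Ici c) c → D = deriv v c := by
    intro c D hc hD
    have hu : UniqueDiffWithinAt ℝ (Ici c) c := uniqueDiffOn_Ici c c self_mem_Ici
    rw [← hD.derivWithin hu]
    exact ((hv c (mem_Ioi.2 hc)).hasDerivAt.hasDerivWithinAt.derivWithin hu)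
  intro x
  refine ⟨?_, ?_, ?_⟩
  · rintro ⟨hx0, hxa⟩
    have ha' : 0 < a := hx0.trans hxa
    have hda : Da = deriv v a := hderiv_eq a Da ha' hDa
    have hβx : β ≤ deriv v x := by
      have := hanti (mem_Ioi.2 hx0) (mem_Ioi.2 ha') hxa.le
      rw [← hda, hDaeq ha'] at this
      exact this
    rw [supIcc _ _ hδ₁, supIcc _ _ hδ₂,
      max_eq_right (by linarith), max_eq_left (by linarith)]
    ring
  · rintro ⟨hax, hxb, hx0⟩
    have hb' : 0 < b := hx0.trans hxb
    have h1x : 1 ≤ deriv v x := by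
      have := hanti (mem_Ioi.2 hx0) (mem_Ioi.2 hb') hxb.le
      rw [← hderiv_eq b Db hb' hDb, hDbeq hb'] at this
      exact this
    have hxβ : deriv v x ≤ β := by
      rcases hax.eq_or_lt with rfl | hax'
      · have ha' : 0 < a := hx0
        rw [← hderiv_eq a Da ha' hDa]
        exact hDaβ
      · exact (endpt v hv hconc ha hDa hax' hx0).trans hDaβ
    rw [supIcc _ _ hδ₁, supIcc _ _ hδ₂,
      max_eq_right (by linarith), max_eq_right (by linarith)]
    ring
  · rintro ⟨hbx, hx0⟩
    have hx1 : deriv v x ≤ 1 := by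
      rcases hbx.eq_or_lt with rfl | hbx'
      · rw [← hderiv_eq b Db hx0 hDb]
        exact hDb1
      · exact (endpt v hv hconc (ha.trans hab) hDb hbx' hx0).trans hDb1
    rw [supIcc _ _ hδ₁, supIcc _ _ hδ₂,
      max_eq_left (by linarith), max_eq_right (by linarith)]
    ring
end
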